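/- Ackermannian lower bound for the multiplicative Goodstein process: let m ∈ ℕ and let i* be least with G_{i*}(m) = 0 (the multiplicative Goodstein process starting at m). Then for all k with 1 ≤ k ≤ i*, F_{G_k(m), k+2}(k) ≤ i*, where F is the function assignment defined in the context. -/

import Mathlib

/-- Multiplicative base change: replace base `k` by `l` hereditarily in the
base-`k` representation `m = k·p + q`, `0 ≤ q < k`. -/
def mbch (k l m : ℕ) : ℕ :=
  if h : m = 0 ∨ k < 2 then 0
  else l * mbch k l (m / k) + m % k
termination_by m
decreasing_by
  push_neg at h
  exact Nat.div_lt_self (Nat.pos_of_ne_zero h.1) h.2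

/-- The multiplicative Goodstein sequence starting at `m`:
`G_0 = m` and `G_(i+1) = bch(G_i, i+2, i+3) - 1` (truncated subtraction). -/
def Gm (m : ℕ) : ℕ → ℕ
  | 0 => m
  | i + 1 => mbch (i + 2) (i + 3) (Gm m i) - 1

/-- The Ackermann hierarchy over the successor function:
`A_0 b = b + 1`, `A_(a+1) 0 = A_a 1`, `A_(a+1) (b+1) = A_a (A_(a+1) b)`. -/
def Ack : ℕ → ℕ → ℕ
  | 0, b => b + 1
  | a + 1, 0 => Ack a 1
  | a + 1, b + 1 => Ack a (Ack (a + 1) b)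



lemma Ack_eq_ack (a : ℕ) : ∀ b, Ack a b = ack a b := by
  induction a with
  | zero => intro b; rw [Ack, ack_zero]
  | succ a ih =>
    intro b
    induction b with
    | zero => rw [Ack, ack_succ_zero, ih]
    | succ b ih2 => rw [Ack, ack_succ_succ, ih, ih2]

lemma Ack_mono (a : ℕ) : Monotone (Ack a) := by
  intro x y h
  simpa [Ack_eq_ack] using ack_mono_right a h

lemma le_Ack (a x : ℕ) : x ≤ Ack a x := by
  rw [Ack_eq_ack]; exact (lt_ack_right a x).le

lemma le_Ack_iter (a d x : ℕ) : x ≤ (Ack a)^[d] x := by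
  induction d with
  | zero => simp
  | succ d ih =>
    rw [Function.iterate_succ_apply']
    exact ih.trans (le_Ack a _)

lemma Ack_iter_mono (a d : ℕ) : Monotone ((Ack a)^[d]) := (Ack_mono a).iterate d

lemma Ack_iter_le_iter (a : ℕ) {d e : ℕ} (h : d ≤ e) (x : ℕ) :
    (Ack a)^[d] x ≤ (Ack a)^[e] x := by
  obtain ⟨c, rfl⟩ := Nat.exists_eq_add_of_le h
  rw [Nat.add_comm, Function.iterate_add_apply]
  exact le_Ack_iter a c _

lemma Ack_succ_eq_iter (a x : ℕ) : Ack (a + 1) x = (Ack a)^[x + 1] 1 := by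
  induction x with
  | zero => rw [Ack]; simp
  | succ x ih => rw [Ack, ih, ← Function.iterate_succ_apply' (Ack a)]

lemma Ack_succ_le_iter (a c x : ℕ) (hx : 1 ≤ x) (hc : x + 1 ≤ c) :
    Ack (a + 1) x ≤ (Ack a)^[c] x := by
  rw [Ack_succ_eq_iter]
  calc (Ack a)^[x+1] 1 ≤ (Ack a)^[x+1] x := Ack_iter_mono a _ hx
  _ ≤ (Ack a)^[c] x := Ack_iter_le_iter a hc x

lemma Ack_zero' (x : ℕ) : Ack 0 x = x + 1 := by rw [Ack]

def FL : ℕ → List ℕ → ℕ → ℕ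
  | _, [], x => x
  | i, d :: L, x => FL (i + 1) L ((Ack i)^[d] x)

@[simp] lemma FL_nil (i x : ℕ) : FL i [] x = x := rfl
@[simp] lemma FL_cons (i d : ℕ) (L : List ℕ) (x : ℕ) :
    FL i (d :: L) x = FL (i + 1) L ((Ack i)^[d] x) := rfl

lemma FL_mono (L : List ℕ) : ∀ i : ℕ, Monotone (FL i L) := by
  induction L with
  | nil => intro i x y h; exact h
  | cons d L ih =>
    intro i x y h
    simp only [FL_cons]
    exact ih (i + 1) (((Ack_mono i).iterate d) h)

/-- Shifting by powers of the base. -/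
lemma FL_pow {c : ℕ} (hc : 1 < c) (r : ℕ) : ∀ n i x : ℕ,
    FL i (Nat.digits c (c ^ r * n)) x = FL (i + r) (Nat.digits c n) x := by
  induction r with
  | zero => intro n i x; simp
  | succ r ih =>
    intro n i x
    rcases Nat.eq_zero_or_pos n with rfl | hn
    · simp
    · have hM : 0 < c ^ r * n := Nat.mul_pos (Nat.pow_pos (by omega)) hn
      have h1 : c ^ (r + 1) * n = c * (c ^ r * n) := by ring
      have h2 : 0 < c ^ (r + 1) * n := by rw [h1]; exact Nat.mul_pos (by omega) hM
      rw [Nat.digits_def' hc h2, h1, Nat.mul_mod_right,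
        Nat.mul_div_cancel_left _ (by omega : 0 < c), FL_cons,
        Function.iterate_zero_apply, ih n (i + 1) x]
      congr 1
      omega

/-- Predecessor at a nonzero lowest digit: exact equality. -/
lemma FL_pred_eq {c : ℕ} (hc : 1 < c) {n : ℕ} (hn : n % c ≠ 0) (i x : ℕ) :
    FL i (Nat.digits c n) x = FL i (Nat.digits c (n - 1)) (Ack i x) := by
  have hn0 : 0 < n := by
    rcases Nat.eq_zero_or_pos n with rfl | h
    · simp at hn
    · exact h
  have hrepr : n - 1 = c * (n / c) + (n % c - 1) := by
    have := Nat.div_add_mod n c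
    omega
  rw [Nat.digits_def' hc hn0, FL_cons]
  rcases Nat.eq_zero_or_pos (n - 1) with h1 | h1
  · have hn1 : n = 1 := by omega
    subst hn1
    have : (1 : ℕ) % c = 1 := Nat.mod_eq_of_lt hc
    rw [h1, this, Nat.div_eq_of_lt hc]
    simp
  · have hlt : n % c - 1 < c := by
      have := Nat.mod_lt n (show 0 < c by omega); omega
    have hmod : (n - 1) % c = n % c - 1 := by
      rw [hrepr, Nat.mul_add_mod]
      exact Nat.mod_eq_of_lt hlt
    have hdiv : (n - 1) / c = n / c := by
      rw [hrepr, Nat.mul_add_div (by omega : 0 < c), Nat.div_eq_of_lt hlt]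
      omega
    rw [Nat.digits_def' hc h1, FL_cons, hmod, hdiv, ← Function.iterate_succ_apply]
    congr 2
    omega

/-- The function assignment `F`: `F_(0,k) = id` and, for `m = a + k^r` with `r`
maximal such that `k^r ∣ m`, `F_(m,k) = F_(a,k) ∘ A_r`. -/
def Fm (k m x : ℕ) : ℕ :=
  if h : m = 0 then x
  else
    Fm k (m - k ^ Nat.findGreatest (fun r => k ^ r ∣ m) m)
      (Ack (Nat.findGreatest (fun r => k ^ r ∣ m) m) x)
termination_by m
decreasing_by
  have hr : k ^ Nat.findGreatest (fun r => k ^ r ∣ m) m ∣ m :=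
    Nat.findGreatest_spec (P := fun r => k ^ r ∣ m) (Nat.zero_le m) (by simp)
  refine Nat.sub_lt (Nat.pos_of_ne_zero h) (Nat.pos_of_ne_zero fun h0 => ?_)
  exact h (Nat.eq_zero_of_zero_dvd (h0 ▸ hr))

/-- Ackermannian lower bound for the multiplicative Goodstein process: if `i*`
is least with `G_(i*)(m) = 0`, then for all `1 ≤ k ≤ i*` we have
`F_(G_k(m), k+2)(k) ≤ i*`. -/
lemma Fm_zero (b x : ℕ) : Fm b 0 x = x := by unfold Fm; simp

lemma Fm_pos (b m x : ℕ) (hm : m ≠ 0) :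
    Fm b m x = Fm b (m - b ^ Nat.findGreatest (fun r => b ^ r ∣ m) m)
      (Ack (Nat.findGreatest (fun r => b ^ r ∣ m) m) x) := by
  conv_lhs => unfold Fm
  rw [dif_neg hm]

lemma FL_pred_le {c : ℕ} (hc : 1 < c) : ∀ n, 0 < n → ∀ i x, 1 ≤ x → x + 1 ≤ c →
    FL i (Nat.digits c n) x ≤ FL i (Nat.digits c (n - 1)) (Ack i x) := by
  intro n
  induction n using Nat.strong_induction_on with
  | _ n ih =>
    intro hn i x hx hxc
    by_cases h : n % c = 0
    · have hq : 0 < n / c :=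
        Nat.div_pos (Nat.le_of_dvd hn (Nat.dvd_of_mod_eq_zero h)) (by omega)
      have hrepr : n = c * (n / c) := by have := Nat.div_add_mod n c; omega
      have hcn : c ≤ n := by
        calc c = c * 1 := by ring
        _ ≤ c * (n / c) := Nat.mul_le_mul_left c hq
        _ = n := hrepr.symm
      have hn1 : 0 < n - 1 := by omega
      have hrepr2 : n - 1 = c * (n / c - 1) + (c - 1) := by
        have : c * (n / c - 1) + c * 1 = c * (n / c) := by
          rw [← Nat.mul_add]; congr 1; omega
        omega
      have hmod : (n - 1) % c = c - 1 := by
        rw [hrepr2, Nat.mul_add_mod]; exact Nat.mod_eq_of_lt (by omega)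
      have hdiv : (n - 1) / c = n / c - 1 := by
        rw [hrepr2, Nat.mul_add_div (by omega : 0 < c), Nat.div_eq_of_lt (by omega : c - 1 < c)]
        omega
      rw [Nat.digits_def' hc hn, FL_cons, h, Function.iterate_zero_apply,
        Nat.digits_def' hc hn1, FL_cons, hmod, hdiv]
      have hiter : (Ack i)^[c - 1] (Ack i x) = (Ack i)^[c] x := by
        rw [← Function.iterate_succ_apply]
        congr 1
        omega
      calc FL (i + 1) (Nat.digits c (n / c)) x
          ≤ FL (i + 1) (Nat.digits c (n / c - 1)) (Ack (i + 1) x) :=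
            ih (n / c) (Nat.div_lt_self hn hc) hq (i + 1) x hx hxc
        _ ≤ FL (i + 1) (Nat.digits c (n / c - 1)) ((Ack i)^[c - 1] (Ack i x)) := by
            apply FL_mono
            rw [hiter]
            exact Ack_succ_le_iter i c x hx hxc
    · exact le_of_eq (FL_pred_eq hc h i x)

lemma Fm_eq {b : ℕ} (hb : 1 < b) : ∀ m x, Fm b m x = FL 0 (Nat.digits b m) x := by
  intro m
  induction m using Nat.strong_induction_on with
  | _ m ih =>
    intro x
    by_cases hm : m = 0
    · subst hm
      rw [Fm_zero]
      simp [FL_nil]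
    · have hm0 : 0 < m := Nat.pos_of_ne_zero hm
      set r := Nat.findGreatest (fun r => b ^ r ∣ m) m with hrdef
      have hdvd : b ^ r ∣ m :=
        Nat.findGreatest_spec (P := fun r => b ^ r ∣ m) (Nat.zero_le m) (by simp)
      have hpow : 0 < b ^ r := Nat.pow_pos (by omega)
      have hndvd : ¬ b ^ (r + 1) ∣ m := by
        intro hd
        have h1 : b ^ (r + 1) ≤ m := Nat.le_of_dvd hm0 hd
        have h2 : r + 1 < b ^ (r + 1) := Nat.lt_pow_self hb
        exact Nat.findGreatest_is_greatest (P := fun r => b ^ r ∣ m)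
          (Nat.lt_succ_self r) (by omega) hd
      set q := m / b ^ r with hqdef
      have hq : b ^ r * q = m := Nat.mul_div_cancel' hdvd
      have hq0 : 0 < q := Nat.div_pos (Nat.le_of_dvd hm0 hdvd) hpow
      have hqmod : q % b ≠ 0 := by
        intro h0
        apply hndvd
        have : b ∣ q := Nat.dvd_of_mod_eq_zero h0
        obtain ⟨t, ht⟩ := this
        refine ⟨t, ?_⟩
        rw [← hq, ht, pow_succ]
        ring
      have hsub : m - b ^ r = b ^ r * (q - 1) := by
        have : b ^ r * (q - 1) + b ^ r * 1 = b ^ r * q := by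
          rw [← Nat.mul_add]; congr 1; omega
        omega
      rw [Fm_pos b m x hm, ← hrdef, ih (m - b ^ r) (Nat.sub_lt hm0 hpow) (Ack r x),
        hsub, FL_pow hb r]
      conv_rhs => rw [← hq]
      rw [FL_pow hb r]
      rw [Nat.zero_add]
      exact (FL_pred_eq hb hqmod r x).symm

lemma mbch_eq {k : ℕ} (hk : 1 < k) (l : ℕ) : ∀ m, mbch k l m = Nat.ofDigits l (Nat.digits k m) := by
  intro m
  induction m using Nat.strong_induction_on with
  | _ m ih =>
    by_cases hm : m = 0
    · subst hm
      rw [mbch, dif_pos (Or.inl rfl)]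
      simp
    · rw [mbch, dif_neg (by push_neg; exact ⟨hm, by omega⟩),
        Nat.digits_def' hk (Nat.pos_of_ne_zero hm), Nat.ofDigits_cons,
        ih (m / k) (Nat.div_lt_self (Nat.pos_of_ne_zero hm) hk)]
      push_cast
      ring

lemma step_le (j n : ℕ) (hj : 1 ≤ j) (hn : n ≠ 0) :
    Fm (j + 2) n j ≤ Fm (j + 3) (mbch (j + 2) (j + 3) n - 1) (j + 1) := by
  have h2 : (1 : ℕ) < j + 2 := by omega
  have h3 : (1 : ℕ) < j + 3 := by omega
  have hdig : Nat.digits (j + 3) (Nat.ofDigits (j + 3) (Nat.digits (j + 2) n))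
      = Nat.digits (j + 2) n := by
    refine Nat.digits_ofDigits _ h3 _ (fun d hd => ?_) (fun h => ?_)
    · have := Nat.digits_lt_base h2 hd
      omega
    · exact Nat.getLast_digit_ne_zero _ (Nat.digits_ne_nil_iff_ne_zero.mp h)
  have hmb : mbch (j + 2) (j + 3) n = Nat.ofDigits (j + 3) (Nat.digits (j + 2) n) :=
    mbch_eq h2 _ n
  have hN0 : 0 < mbch (j + 2) (j + 3) n := by
    rcases Nat.eq_zero_or_pos (mbch (j + 2) (j + 3) n) with h | h
    · exfalso
      apply Nat.digits_ne_nil_iff_ne_zero.mpr hn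
      rw [← hdig, ← hmb, h]
      simp
    · exact h
  rw [Fm_eq h2, Fm_eq h3]
  calc FL 0 (Nat.digits (j + 2) n) j
      = FL 0 (Nat.digits (j + 3) (mbch (j + 2) (j + 3) n)) j := by rw [hmb, hdig]
    _ ≤ FL 0 (Nat.digits (j + 3) (mbch (j + 2) (j + 3) n - 1)) (Ack 0 j) :=
        FL_pred_le h3 _ hN0 0 j hj (by omega)
    _ = FL 0 (Nat.digits (j + 3) (mbch (j + 2) (j + 3) n - 1)) (j + 1) := by
        rw [Ack_zero']

theorem multiplicative_goodstein_lower_bound (m istar : ℕ)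
    (h0 : Gm m istar = 0) (hmin : ∀ j, j < istar → Gm m j ≠ 0)
    (k : ℕ) (hk1 : 1 ≤ k) (hk2 : k ≤ istar) :
    Fm (k + 2) (Gm m k) k ≤ istar := by
  have descend : ∀ d j, 1 ≤ j → j + d = istar → Fm (j + 2) (Gm m j) j ≤ istar := by
    intro d
    induction d with
    | zero =>
      intro j hj hji
      have hj' : j = istar := by omega
      subst hj'
      rw [h0, Fm_zero]
    | succ d ih =>
      intro j hj hji
      have hne : Gm m j ≠ 0 := hmin j (by omega)
      have h1 := step_le j (Gm m j) hj hne
      have h2 : Gm m (j + 1) = mbch (j + 2) (j + 3) (Gm m j) - 1 := rfl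
      calc Fm (j + 2) (Gm m j) j
          ≤ Fm (j + 3) (Gm m (j + 1)) (j + 1) := by rw [h2]; exact h1
        _ ≤ istar := by
            have := ih (j + 1) (by omega) (by omega)
            convert this using 2
      
  exact descend (istar - k) k hk1 (by omega)
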